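/- arXiv:1310.5023 — 3 statements merged into one kernel-verified Lean document; each statement's English description precedes it below -/
import Mathlib

section
/- For any semigroup S with a unary operation satisfying x̄x = xx̄, x̄²x = x̄, x²x̄ = x̿, (x̄x)‾ = x̄x, and (xy)‾x = x(yx)‾, and for integers p, q ≥ 0, the identity x^{ω+p}·x^{ω+q} = x^{ω+p+q} holds, where x^{ω+r} := x̄ x^{r+1} for r ≥ 0. -/
/-- `spow x n` is the `(n+1)`-st power of `x` in a semigroup: `spow x 0 = x`. -/
def spow {S : Type*} [Semigroup S] (x : S) : ℕ → S
  | 0 => x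
  | n + 1 => spow x n * x

lemma spow_comm_self {S : Type*} [Semigroup S] (x : S) : ∀ n, x * spow x n = spow x n * x
  | 0 => rfl
  | n + 1 => by rw [spow, ← mul_assoc, spow_comm_self x n]

lemma spow_comm_bar {S : Type*} [Semigroup S] (bar : S → S)
    (h0 : ∀ x : S, bar x * x = x * bar x) (x : S) :
    ∀ n, spow x n * bar x = bar x * spow x n
  | 0 => (h0 x).symm
  | n + 1 => by
    rw [spow, mul_assoc, ← h0 x, ← mul_assoc, spow_comm_bar bar h0 x n, mul_assoc]

lemma spow_add {S : Type*} [Semigroup S] (x : S) (p : ℕ) :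
    ∀ q, spow x p * spow x q = x * spow x (p + q)
  | 0 => by rw [Nat.add_zero, spow_comm_self, spow]
  | q + 1 => by
    rw [spow, ← mul_assoc, spow_add x p q, mul_assoc, ← spow, ← Nat.add_assoc]

/-- For any unary semigroup satisfying `x̄x = xx̄`, `x̄²x = x̄`,
`x²x̄ = bar (bar x)`, `bar (x̄x) = x̄x`, and `bar (xy) x = x bar (yx)`, and all
`p, q ≥ 0`, the identity `x^{ω+p} · x^{ω+q} = x^{ω+p+q}` holds, where
`x^{ω+r} := x̄ x^{r+1} = bar x * spow x r`. -/
theorem stmt11 {S : Type*} [Semigroup S] (bar : S → S)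
    (h0 : ∀ x : S, bar x * x = x * bar x)
    (h1 : ∀ x : S, bar x * bar x * x = bar x)
    (h2 : ∀ x : S, x * x * bar x = bar (bar x))
    (h3 : ∀ x : S, bar (bar x * x) = bar x * x)
    (h4 : ∀ x y : S, bar (x * y) * x = x * bar (y * x))
    (x : S) (p q : ℕ) :
    (bar x * spow x p) * (bar x * spow x q) = bar x * spow x (p + q) := by
  calc (bar x * spow x p) * (bar x * spow x q)
      = bar x * (spow x p * bar x) * spow x q := by simp [mul_assoc]
    _ = bar x * (bar x * spow x p) * spow x q := by rw [spow_comm_bar bar h0]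
    _ = (bar x * bar x) * (spow x p * spow x q) := by simp [mul_assoc]
    _ = (bar x * bar x) * (x * spow x (p + q)) := by rw [spow_add]
    _ = (bar x * bar x * x) * spow x (p + q) := by simp [mul_assoc]
    _ = bar x * spow x (p + q) := by rw [h1]
end

section
/- The semigroup Sing(A) of singular words is 𝒥-trivial: if two 𝒮-classes α, β satisfy α = σ₁βτ₁ and β = σ₂ατ₂ for some (possibly empty) swords σᵢ, τᵢ, then α = β. -/
/-- The free algebra `Z(A)` over the alphabet `A` with one binary operation and
countably many unary operations `x ↦ x^{ω+q}`, `q ∈ ℤ`, presented as a term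
algebra (associativity is imposed as part of the congruence below). -/
inductive ZWord (A : Type*) where
  | letter : A → ZWord A
  | mul : ZWord A → ZWord A → ZWord A
  | omegaPow : ZWord A → ℤ → ZWord A

/-- The fully invariant congruence 𝒮 on `Z(A)` generated by associativity and
the pairs `(x^{ω+q}, x x^{ω+q-1})`, `(x^{ω+q}, x^{ω+q-1} x)`, and
`(x (yx)^{ω+q}, (xy)^{ω+q} x)` for all `q ∈ ℤ`. -/
inductive SRel {A : Type*} : ZWord A → ZWord A → Prop where
  | assoc (a b c : ZWord A) : SRel ((a.mul b).mul c) (a.mul (b.mul c))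
  | unwind_left (x : ZWord A) (q : ℤ) :
      SRel (x.omegaPow q) (x.mul (x.omegaPow (q - 1)))
  | unwind_right (x : ZWord A) (q : ℤ) :
      SRel (x.omegaPow q) ((x.omegaPow (q - 1)).mul x)
  | roll (x y : ZWord A) (q : ℤ) :
      SRel (x.mul ((y.mul x).omegaPow q)) (((x.mul y).omegaPow q).mul x)
  | refl (x : ZWord A) : SRel x x
  | symm {a b : ZWord A} : SRel a b → SRel b a
  | trans {a b c : ZWord A} : SRel a b → SRel b c → SRel a c
  | mul_congr {a b c d : ZWord A} : SRel a b → SRel c d → SRel (a.mul c) (b.mul d)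
  | omegaPow_congr {a b : ZWord A} (q : ℤ) : SRel a b → SRel (a.omegaPow q) (b.omegaPow q)

/-- The 𝒮-class of `α` equals `σ₁ β τ₁` for some possibly empty swords
`σ₁, τ₁`: i.e. `β` is a 𝒥-factor of `α` in `Sing(A)`. -/
def JFactor {A : Type*} (β α : ZWord A) : Prop :=
  SRel α β ∨ (∃ s : ZWord A, SRel α (s.mul β)) ∨
    (∃ t : ZWord A, SRel α (β.mul t)) ∨ ∃ s t : ZWord A, SRel α ((s.mul β).mul t)


namespace ZWordAux
variable {A : Type*}

/-- Length polynomial evaluated at `n` (playing the role of `ω`). -/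
def len : ZWord A → ℤ → ℤ
  | ZWord.letter _, _ => 1
  | ZWord.mul a b, n => len a n + len b n
  | ZWord.omegaPow x q, n => (n + q) * len x n

lemma len_congr {a b : ZWord A} (h : SRel a b) : ∀ n, len a n = len b n := by
  induction h with
  | assoc a b c => intro n; simp only [len]; ring
  | unwind_left x q => intro n; simp only [len]; ring
  | unwind_right x q => intro n; simp only [len]; ring
  | roll x y q => intro n; simp only [len]; ring
  | refl x => intro n; rfl
  | symm _ ih => intro n; exact (ih n).symm
  | trans _ _ ih1 ih2 => intro n; exact (ih1 n).trans (ih2 n)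
  | mul_congr _ _ ih1 ih2 => intro n; simp only [len, ih1 n, ih2 n]
  | omegaPow_congr q _ ih => intro n; simp only [len, ih n]

lemma len_pos (w : ZWord A) : ∃ N : ℤ, ∀ n ≥ N, 1 ≤ len w n := by
  induction w with
  | letter a => exact ⟨0, fun n _ => le_refl 1⟩
  | mul a b iha ihb =>
    obtain ⟨Na, ha⟩ := iha; obtain ⟨Nb, hb⟩ := ihb
    refine ⟨max Na Nb, fun n hn => ?_⟩
    have h1 := ha n (le_trans (le_max_left _ _) hn)
    have h2 := hb n (le_trans (le_max_right _ _) hn)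
    simp only [len]; omega
  | omegaPow x q ih =>
    obtain ⟨Nx, hx⟩ := ih
    refine ⟨max Nx (1 - q), fun n hn => ?_⟩
    have h1 := hx n (le_trans (le_max_left _ _) hn)
    have h2 : 1 ≤ n + q := by
      have := le_trans (le_max_right Nx (1 - q)) hn; omega
    simp only [len]; nlinarith

lemma jfac {β α : ZWord A} (h : JFactor β α) :
    SRel α β ∨ ∃ N : ℤ, ∀ n ≥ N, len β n + 1 ≤ len α n := by
  rcases h with h | ⟨s, h⟩ | ⟨t, h⟩ | ⟨s, t, h⟩
  · exact Or.inl h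
  · obtain ⟨N, hN⟩ := len_pos s
    refine Or.inr ⟨N, fun n hn => ?_⟩
    have he := len_congr h n
    have := hN n hn
    simp only [len] at he; omega
  · obtain ⟨N, hN⟩ := len_pos t
    refine Or.inr ⟨N, fun n hn => ?_⟩
    have he := len_congr h n
    have := hN n hn
    simp only [len] at he; omega
  · obtain ⟨Ns, hNs⟩ := len_pos s
    obtain ⟨Nt, hNt⟩ := len_pos t
    refine Or.inr ⟨max Ns Nt, fun n hn => ?_⟩
    have he := len_congr h n
    have := hNs n (le_trans (le_max_left _ _) hn)
    have := hNt n (le_trans (le_max_right _ _) hn)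
    simp only [len] at he; omega

end ZWordAux

/-- `Sing(A)` is 𝒥-trivial: if `α = σ₁βτ₁` and `β = σ₂ατ₂` for some possibly
empty swords `σᵢ, τᵢ`, then `α = β` in `Sing(A)`. -/
theorem stmt13 {A : Type*} (α β : ZWord A)
    (h1 : JFactor β α) (h2 : JFactor α β) : SRel α β := by
  rcases ZWordAux.jfac h1 with h | ⟨N1, hN1⟩
  · exact h
  rcases ZWordAux.jfac h2 with h | ⟨N2, hN2⟩
  · exact h.symm
  have a1 := hN1 (max N1 N2) (le_max_left _ _)
  have a2 := hN2 (max N1 N2) (le_max_right _ _)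
  omega
end

section
/- In the free Burnside semigroup B(A, m, n) = A⁺/(x^m = x^{m+n}) with m ≥ 3, n ≥ 1, assuming every element has only finitely many factors (prefixes, suffixes, and subwords), the complement of the set of factors of any element b is an ideal, and the associated Rees quotient is finite; consequently B(A, m, n) is residually finite. -/
/-- The congruence on the free semigroup `A⁺` generated by all instances of the
Burnside identity `xᵐ = x^{m+n}` (recall `spow u k = u^{k+1}`). -/
inductive BRel (A : Type) (m n : ℕ) : FreeSemigroup A → FreeSemigroup A → Prop where
  | base (u : FreeSemigroup A) : BRel A m n (spow u (m - 1)) (spow u (m + n - 1))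
  | refl (u : FreeSemigroup A) : BRel A m n u u
  | symm {u v : FreeSemigroup A} : BRel A m n u v → BRel A m n v u
  | trans {u v w : FreeSemigroup A} : BRel A m n u v → BRel A m n v w → BRel A m n u w
  | mul_congr {u₁ v₁ u₂ v₂ : FreeSemigroup A} :
      BRel A m n u₁ v₁ → BRel A m n u₂ v₂ → BRel A m n (u₁ * u₂) (v₁ * v₂)

/-- The free Burnside semigroup `B(A, m, n) = A⁺/(xᵐ = x^{m+n})`. -/
def BS (A : Type) (m n : ℕ) : Type := Quot (BRel A m n)

instance {A : Type} {m n : ℕ} : Mul (BS A m n) :=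
  ⟨Quot.map₂ (· * ·)
    (fun a _ _ h => BRel.mul_congr (BRel.refl a) h)
    (fun _ _ b h => BRel.mul_congr h (BRel.refl b))⟩

/-- `c` is a factor of `b`: `b = s c t` with `s, t` possibly empty. -/
def IsFactor {S : Type*} [Mul S] (c b : S) : Prop :=
  c = b ∨ (∃ s, b = s * c) ∨ (∃ t, b = c * t) ∨ ∃ s t, b = (s * c) * t

/-- `I` is a (two-sided) ideal of the semigroup `S`. -/
def IsIdeal {S : Type*} [Mul S] (I : Set S) : Prop :=
  ∀ a ∈ I, ∀ s : S, s * a ∈ I ∧ a * s ∈ I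

/-- The Rees congruence of an ideal `I`: it collapses `I` to one element. -/
def ReesRel {S : Type*} (I : Set S) (a b : S) : Prop :=
  a = b ∨ (a ∈ I ∧ b ∈ I)

section Aux
variable {A : Type} {m n : ℕ}

lemma BS.mul_assoc (x y z : BS A m n) : x * y * z = x * (y * z) := by
  induction x using Quot.ind
  induction y using Quot.ind
  induction z using Quot.ind
  rename_i x y z
  exact congrArg (Quot.mk (BRel A m n)) (_root_.mul_assoc x y z)

lemma factor_of_mul_left (a s b : BS A m n) (h : IsFactor (s * a) b) : IsFactor a b := by
  rcases h with h | ⟨u, h⟩ | ⟨t, h⟩ | ⟨u, t, h⟩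
  · exact Or.inr (Or.inl ⟨s, h.symm⟩)
  · exact Or.inr (Or.inl ⟨u * s, by rw [h, BS.mul_assoc]⟩)
  · exact Or.inr (Or.inr (Or.inr ⟨s, t, h⟩))
  · exact Or.inr (Or.inr (Or.inr ⟨u * s, t, by rw [h, BS.mul_assoc u s a]⟩))

lemma factor_of_mul_right (a s b : BS A m n) (h : IsFactor (a * s) b) : IsFactor a b := by
  rcases h with h | ⟨u, h⟩ | ⟨t, h⟩ | ⟨u, t, h⟩
  · exact Or.inr (Or.inr (Or.inl ⟨s, h.symm⟩))
  · exact Or.inr (Or.inr (Or.inr ⟨u, s, by rw [h, BS.mul_assoc]⟩))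
  · exact Or.inr (Or.inr (Or.inl ⟨s * t, by rw [h, BS.mul_assoc]⟩))
  · exact Or.inr (Or.inr (Or.inr ⟨u, s * t,
      by rw [h, ← BS.mul_assoc u a s, BS.mul_assoc (u * a) s t]⟩))

/-- The complement of the factor set of any `b` is an ideal. -/
lemma ideal_compl (b : BS A m n) : IsIdeal {c : BS A m n | IsFactor c b}ᶜ := by
  intro a ha s
  constructor
  · exact fun h => ha (factor_of_mul_left a s b h)
  · exact fun h => ha (factor_of_mul_right a s b h)

noncomputable def reesMapFun (b x : BS A m n) : Option {c : BS A m n // IsFactor c b} :=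
  @dite _ (IsFactor x b) (Classical.dec _) (fun h => some ⟨x, h⟩) (fun _ => none)

/-- The map to the factor set with a point added, respecting the Rees relation. -/
noncomputable def reesMap (b : BS A m n) :
    Quot (ReesRel {c : BS A m n | IsFactor c b}ᶜ) → Option {c : BS A m n // IsFactor c b} :=
  Quot.lift (reesMapFun b)
    (by
      rintro x y (rfl | ⟨hx, hy⟩)
      · rfl
      · have hx' : ¬ IsFactor x b := hx
        have hy' : ¬ IsFactor y b := hy
        show reesMapFun b x = reesMapFun b y
        unfold reesMapFun
        rw [dif_neg hx', dif_neg hy'])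

lemma reesMap_mk (b x : BS A m n) :
    reesMap b (Quot.mk _ x) = reesMapFun b x := rfl

lemma reesMap_injective (b : BS A m n) : Function.Injective (reesMap b) := by
  intro x y
  induction x using Quot.ind
  induction y using Quot.ind
  rename_i x y
  intro h
  rw [reesMap_mk, reesMap_mk] at h
  unfold reesMapFun at h
  apply Quot.sound
  by_cases hx : IsFactor x b <;> by_cases hy : IsFactor y b
  · rw [dif_pos hx, dif_pos hy] at h
    exact Or.inl (congrArg Subtype.val (Option.some_injective _ h))
  · rw [dif_pos hx, dif_neg hy] at h; exact absurd h (by simp)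
  · rw [dif_neg hx, dif_pos hy] at h; exact absurd h (by simp)
  · exact Or.inr ⟨hx, hy⟩

lemma optFinite (b : BS A m n) (h : {c : BS A m n | IsFactor c b}.Finite) :
    Finite (Option {c : BS A m n // IsFactor c b}) := by
  have : Finite {c : BS A m n // IsFactor c b} := h.to_subtype
  exact Finite.of_equiv ({c : BS A m n // IsFactor c b} ⊕ PUnit)
    (Equiv.optionEquivSumPUnit.{0,0} _).symm

end Aux

/-- In `B(A, m, n)` with `m ≥ 3`, `n ≥ 1`, assuming every element has only
finitely many factors, the complement of the factor set of any `b` is an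
ideal, the corresponding Rees quotient is finite, and consequently
`B(A, m, n)` is residually finite. -/
theorem stmt18 {A : Type} (m n : ℕ) (hm : 3 ≤ m) (hn : 1 ≤ n)
    (hfac : ∀ b : BS A m n, {c : BS A m n | IsFactor c b}.Finite) :
    (∀ b : BS A m n, IsIdeal {c : BS A m n | IsFactor c b}ᶜ) ∧
    (∀ b : BS A m n, Finite (Quot (ReesRel {c : BS A m n | IsFactor c b}ᶜ))) ∧
    (∀ a b : BS A m n, a ≠ b →
      ∃ (T : Type) (mulT : T → T → T) (f : BS A m n → T),
        Finite T ∧ (∀ x y z : T, mulT (mulT x y) z = mulT x (mulT y z)) ∧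
        (∀ u v : BS A m n, f (u * v) = mulT (f u) (f v)) ∧ f a ≠ f b) := by
  have hfin : ∀ b : BS A m n,
      Finite (Quot (ReesRel {c : BS A m n | IsFactor c b}ᶜ)) := by
    intro b
    have := optFinite b (hfac b)
    exact Finite.of_injective (reesMap b) (reesMap_injective b)
  refine ⟨fun b => ideal_compl b, hfin, ?_⟩
  intro a b hab
  set I : Set (BS A m n) := {c : BS A m n | IsFactor c a}ᶜ with hI
  have hid := ideal_compl a
  refine ⟨Quot (ReesRel I),
    Quot.map₂ (· * ·)
      (fun s x y h => by
        rcases h with rfl | ⟨hx, hy⟩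
        · exact Or.inl rfl
        · exact Or.inr ⟨(hid x hx s).1, (hid y hy s).1⟩)
      (fun x y s h => by
        rcases h with rfl | ⟨hx, hy⟩
        · exact Or.inl rfl
        · exact Or.inr ⟨(hid x hx s).2, (hid y hy s).2⟩),
    Quot.mk _, hfin a, ?_, fun u v => rfl, ?_⟩
  · intro x y z
    induction x using Quot.ind
    induction y using Quot.ind
    induction z using Quot.ind
    exact congrArg (Quot.mk _) (BS.mul_assoc _ _ _)
  · intro h
    have h2 := congrArg (reesMap a) h
    rw [reesMap_mk, reesMap_mk] at h2
    unfold reesMapFun at h2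
    have ha : IsFactor a a := Or.inl rfl
    by_cases hb : IsFactor b a
    · rw [dif_pos ha, dif_pos hb] at h2
      exact hab (congrArg Subtype.val (Option.some_injective _ h2))
    · rw [dif_pos ha, dif_neg hb] at h2
      exact absurd h2 (by simp)
end
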